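/- arXiv:1802.08157 — 2 statements merged into one kernel-verified Lean document; each statement's English description precedes it below -/
import Mathlib

section
/- Let H : ℝ^{2d} → ℝ be twice continuously differentiable and consider the Hamiltonian system w' = J∇H(w). Let a_{ij}, b_i (1 ≤ i,j ≤ s) be Runge–Kutta coefficients satisfying the symplecticity condition b_i a_{ij} + b_j a_{ji} = b_i b_j for all i, j. Fix a step size Δt and suppose that on an open set U ⊆ ℝ^{2d} there are continuously differentiable maps u_1, …, u_s : U → ℝ^{2d} and Φ : U → ℝ^{2d} satisfying, for every w ∈ U, the stage equations u_i(w) = w + Δt Σ_{j=1}^s a_{ij} J∇H(u_j(w)) for i = 1,…,s, and Φ(w) = w + Δt Σ_{i=1}^s b_i J∇H(u_i(w)). Then Φ is symplectic, i.e. (DΦ(w))ᵀ J DΦ(w) = J for all w ∈ U. -/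
open Matrix

/-- The canonical symplectic matrix `J = [[0, I], [-I, 0]]` on `ℝ^{2d}`,
with coordinates indexed by `Fin d ⊕ Fin d` (first block: positions, second: momenta). -/
noncomputable def Jmat (d : ℕ) : Matrix (Fin d ⊕ Fin d) (Fin d ⊕ Fin d) ℝ :=
  Matrix.fromBlocks 0 1 (-1) 0

/-- The gradient of a scalar function on `ι → ℝ`, given by its partial derivatives. -/
noncomputable def grad {ι : Type*} [Fintype ι] [DecidableEq ι]
    (H : (ι → ℝ) → ℝ) (w : ι → ℝ) : ι → ℝ :=
  fun i => fderiv ℝ H w (Pi.single i 1)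

/-- The Jacobian matrix of a map `g : (ι → ℝ) → (ι → ℝ)` at a point `w`. -/
noncomputable def jacobian {ι : Type*} [Fintype ι] [DecidableEq ι]
    (g : (ι → ℝ) → (ι → ℝ)) (w : ι → ℝ) : Matrix ι ι ℝ :=
  Matrix.of fun i j => fderiv ℝ (fun x => g x i) w (Pi.single j 1)

section Helpers

variable {ι : Type*} [Fintype ι] [DecidableEq ι]

/-- Matrix of a continuous linear map on `ι → ℝ`. -/
noncomputable def matOf (L : (ι → ℝ) →L[ℝ] (ι → ℝ)) : Matrix ι ι ℝ :=
  Matrix.of fun i j => L (Pi.single j 1) i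

lemma clm_apply_eq_sum (L : (ι → ℝ) →L[ℝ] (ι → ℝ)) (v : ι → ℝ) :
    L v = ∑ k, v k • L (Pi.single k 1) := by
  have hs : ∀ k : ι, (Pi.single k 1 : ι → ℝ) = fun j => if k = j then 1 else 0 := by
    intro k; funext j; simp [Pi.single_apply, eq_comm]
  conv_lhs => rw [pi_eq_sum_univ v]
  rw [map_sum]
  simp only [_root_.map_smul, hs]

@[simp] lemma matOf_apply (L : (ι → ℝ) →L[ℝ] (ι → ℝ)) (i j : ι) :
    matOf L i j = L (Pi.single j 1) i := rfl

lemma matOf_comp (L L' : (ι → ℝ) →L[ℝ] (ι → ℝ)) :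
    matOf (L.comp L') = matOf L * matOf L' := by
  ext i j
  rw [Matrix.mul_apply]
  simp only [matOf_apply, ContinuousLinearMap.comp_apply]
  rw [clm_apply_eq_sum L (L' (Pi.single j 1))]
  rw [Finset.sum_apply]
  apply Finset.sum_congr rfl
  intro k _
  simp [mul_comm]

lemma matOf_id : matOf (ContinuousLinearMap.id ℝ (ι → ℝ)) = 1 := by
  ext i j
  simp [Matrix.one_apply, Pi.single_apply, eq_comm]

lemma matOf_add (L L' : (ι → ℝ) →L[ℝ] (ι → ℝ)) : matOf (L + L') = matOf L + matOf L' := by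
  ext i j; simp [Matrix.sum_apply]

lemma matOf_smul (c : ℝ) (L : (ι → ℝ) →L[ℝ] (ι → ℝ)) : matOf (c • L) = c • matOf L := by
  ext i j; simp [Matrix.sum_apply]

lemma matOf_sum {n : Type*} (t : Finset n) (L : n → (ι → ℝ) →L[ℝ] (ι → ℝ)) :
    matOf (∑ k ∈ t, L k) = ∑ k ∈ t, matOf (L k) := by
  ext i j; simp [Matrix.sum_apply]

/-- mulVec as a continuous linear map. -/
noncomputable def mvCLM (A : Matrix ι ι ℝ) : (ι → ℝ) →L[ℝ] (ι → ℝ) :=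
  LinearMap.toContinuousLinearMap A.mulVecLin

@[simp] lemma mvCLM_apply (A : Matrix ι ι ℝ) (v : ι → ℝ) : mvCLM A v = A.mulVec v := rfl

lemma matOf_mvCLM (A : Matrix ι ι ℝ) : matOf (mvCLM A) = A := by
  ext i j
  simp [Matrix.mulVec_single]

lemma jacobian_eq_matOf {g : (ι → ℝ) → (ι → ℝ)} {w : ι → ℝ}
    (hg : DifferentiableAt ℝ g w) :
    (Matrix.of fun i j => fderiv ℝ (fun x => g x i) w (Pi.single j 1)) = matOf (fderiv ℝ g w) := by
  ext i j
  have h : (fun x => g x i) = (ContinuousLinearMap.proj (R := ℝ) (φ := fun _ : ι => ℝ) i) ∘ g :=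
    rfl
  rw [Matrix.of_apply, h, fderiv_comp w (ContinuousLinearMap.proj i).differentiableAt hg,
    ContinuousLinearMap.fderiv]
  rfl


lemma key_algebra {ι : Type*} [Fintype ι] [DecidableEq ι]
    {s : ℕ} (J : Matrix ι ι ℝ) (hJt : Jᵀ = -J) (hJJ : Jᵀ * J = 1)
    (a : Fin s → Fin s → ℝ) (b : Fin s → ℝ)
    (hsymp : ∀ i j, b i * a i j + b j * a j i = b i * b j)
    (S K : Fin s → Matrix ι ι ℝ) (hS : ∀ i, (S i)ᵀ = S i)
    (hK : ∀ i, K i = 1 + ∑ j, a i j • (J * S j * K j))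
    (P : Matrix ι ι ℝ) (hP : P = 1 + ∑ i, b i • (J * S i * K i)) :
    Pᵀ * J * P = J := by
  have hJJ' : J * J = -1 := by
    have h := hJJ
    rw [hJt, neg_mul] at h
    exact neg_eq_iff_eq_neg.mp h
  set T : Fin s → Matrix ι ι ℝ := fun i => S i * K i with hT
  set R : Fin s → Fin s → Matrix ι ι ℝ := fun i j => (T i)ᵀ * (J * T j) with hR
  have fM : ∀ i, J * S i * K i = J * T i := fun i => mul_assoc _ _ _
  have fTt : ∀ i, (T i)ᵀ = (K i)ᵀ * S i := by
    intro i; rw [hT]; simp [transpose_mul, hS i]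
  have fMtJ : ∀ i, (J * T i)ᵀ * J = (T i)ᵀ := by
    intro i; rw [transpose_mul, mul_assoc, hJJ, mul_one]
  have fJM : ∀ i, J * (J * T i) = -(T i) := by
    intro i; rw [← mul_assoc, hJJ', neg_one_mul]
  -- stage equation rewritten
  have hK' : ∀ i, K i - 1 = ∑ j, a i j • (J * T j) := by
    intro i
    rw [hK i]
    simp only [fM]
    abel
  have hKt' : ∀ i, (K i)ᵀ - 1 = ∑ j, a i j • (J * T j)ᵀ := by
    intro i
    have := congrArg Matrix.transpose (hK' i)
    simpa [transpose_sum, transpose_smul] using this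
  -- core identity
  have core : ∀ i, (T i)ᵀ - T i = -∑ j, (a i j • R j i + a i j • R i j) := by
    intro i
    have h1 : (T i)ᵀ - T i = ((K i)ᵀ - 1) * T i - (T i)ᵀ * (K i - 1) := by
      rw [fTt i]
      have : T i = S i * K i := rfl
      rw [this]
      noncomm_ring
    rw [h1, hK' i, hKt' i, Finset.sum_mul, Matrix.mul_sum]
    rw [← Finset.sum_sub_distrib, ← Finset.sum_neg_distrib]
    apply Finset.sum_congr rfl
    intro j _
    rw [smul_mul_assoc, mul_smul_comm, ← smul_sub]
    rw [← smul_add, ← smul_neg]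
    congr 1
    have e1 : (J * T j)ᵀ * T i = -R j i := by
      rw [transpose_mul, hJt, hR]
      simp [Matrix.neg_mul, Matrix.mul_neg, mul_assoc]
    rw [e1, hR]
    abel
  -- expansion
  set A : Matrix ι ι ℝ := ∑ i, b i • (J * T i) with hA
  have hP' : P = 1 + A := by rw [hP]; simp only [fM]; rfl
  have hPt : Pᵀ = 1 + Aᵀ := by rw [hP']; simp [transpose_add]
  have hAt : Aᵀ = ∑ i, b i • (J * T i)ᵀ := by
    rw [hA]; simp [transpose_sum, transpose_smul]
  have hAtJ : Aᵀ * J = ∑ i, b i • (T i)ᵀ := by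
    rw [hAt, Finset.sum_mul]
    exact Finset.sum_congr rfl fun i _ => by rw [smul_mul_assoc, fMtJ i]
  have hJA : J * A = -∑ i, b i • T i := by
    rw [hA, Matrix.mul_sum, ← Finset.sum_neg_distrib]
    exact Finset.sum_congr rfl fun i _ => by rw [mul_smul_comm, fJM i, smul_neg]
  have hAtJA : Aᵀ * J * A = ∑ i, ∑ j, (b i * b j) • R i j := by
    rw [hAtJ, hA, Finset.sum_mul]
    apply Finset.sum_congr rfl
    intro i _
    rw [smul_mul_assoc, Matrix.mul_sum, Finset.smul_sum]
    apply Finset.sum_congr rfl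
    intro j _
    rw [mul_smul_comm, smul_smul, hR]
  -- the cancellation
  have main : ∑ i, b i • ((T i)ᵀ - T i) + ∑ i, ∑ j, (b i * b j) • R i j = 0 := by
    have e2 : ∑ i, b i • ((T i)ᵀ - T i)
        = -∑ i, ∑ j, ((b i * a i j) • R j i + (b i * a i j) • R i j) := by
      rw [← Finset.sum_neg_distrib]
      apply Finset.sum_congr rfl
      intro i _
      rw [core i, smul_neg, Finset.smul_sum]
      congr 1
      apply Finset.sum_congr rfl
      intro j _
      rw [smul_add, smul_smul, smul_smul]
    have swap : ∑ i, ∑ j, (b i * a i j) • R j i = ∑ i, ∑ j, (b j * a j i) • R i j :=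
      Finset.sum_comm
    rw [e2, add_comm, ← sub_eq_add_neg, sub_eq_zero]
    simp only [Finset.sum_add_distrib, swap]
    rw [← Finset.sum_add_distrib]
    apply Finset.sum_congr rfl
    intro i _
    rw [← Finset.sum_add_distrib]
    apply Finset.sum_congr rfl
    intro j _
    rw [← add_smul]
    congr 1
    linarith [hsymp i j]
  have e1 : Aᵀ * J + J * A = ∑ i, b i • ((T i)ᵀ - T i) := by
    rw [hAtJ, hJA, ← sub_eq_add_neg, ← Finset.sum_sub_distrib]
    exact Finset.sum_congr rfl fun i _ => (smul_sub _ _ _).symm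
  calc Pᵀ * J * P = (1 + Aᵀ) * J * (1 + A) := by rw [hPt, hP']
    _ = J + ((Aᵀ * J + J * A) + Aᵀ * J * A) := by noncomm_ring
    _ = J := by rw [e1, hAtJA, main, add_zero]


lemma jacobian_eq_matOf' {ι : Type*} [Fintype ι] [DecidableEq ι]
    {g : (ι → ℝ) → (ι → ℝ)} {w : ι → ℝ} (hg : DifferentiableAt ℝ g w) :
    jacobian g w = matOf (fderiv ℝ g w) := jacobian_eq_matOf hg

lemma Jmat_transpose (d : ℕ) : (Jmat d)ᵀ = -(Jmat d) := by
  ext i j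
  cases i <;> cases j <;> simp [Jmat, Matrix.fromBlocks, Matrix.one_apply, eq_comm]

lemma Jmat_mul_self (d : ℕ) : Jmat d * Jmat d = -1 := by
  rw [show ((-1 : Matrix (Fin d ⊕ Fin d) (Fin d ⊕ Fin d) ℝ)) =
    Matrix.fromBlocks (-1) 0 0 (-1) by
      rw [← Matrix.fromBlocks_one (l := Fin d) (m := Fin d) (α := ℝ)]
      ext i j
      cases i <;> cases j <;> simp [Matrix.fromBlocks]]
  rw [Jmat, Matrix.fromBlocks_multiply]
  simp

lemma Jmat_tr_mul (d : ℕ) : (Jmat d)ᵀ * Jmat d = 1 := by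
  rw [Jmat_transpose, Matrix.neg_mul, Jmat_mul_self]
  simp

end Helpers

/-- A Runge–Kutta method whose coefficients satisfy the symplecticity condition
`bᵢ aᵢⱼ + bⱼ aⱼᵢ = bᵢ bⱼ` produces a symplectic one-step map for the Hamiltonian
system `w' = J ∇H(w)`. -/
theorem symplectic_RK_step_is_symplectic
    (d s : ℕ) (H : ((Fin d ⊕ Fin d) → ℝ) → ℝ) (hH : ContDiff ℝ 2 H)
    (a : Fin s → Fin s → ℝ) (b : Fin s → ℝ)
    (hsymp : ∀ i j, b i * a i j + b j * a j i = b i * b j)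
    (Δt : ℝ) (U : Set ((Fin d ⊕ Fin d) → ℝ)) (hU : IsOpen U)
    (u : Fin s → ((Fin d ⊕ Fin d) → ℝ) → ((Fin d ⊕ Fin d) → ℝ))
    (Φ : ((Fin d ⊕ Fin d) → ℝ) → ((Fin d ⊕ Fin d) → ℝ))
    (hu : ∀ i, ContDiffOn ℝ 1 (u i) U)
    (hΦ : ContDiffOn ℝ 1 Φ U)
    (hstage : ∀ w ∈ U, ∀ i, u i w =
      w + Δt • ∑ j, a i j • (Jmat d).mulVec (grad H (u j w)))
    (hstep : ∀ w ∈ U, Φ w =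
      w + Δt • ∑ i, b i • (Jmat d).mulVec (grad H (u i w))) :
    ∀ w ∈ U, (jacobian Φ w)ᵀ * Jmat d * jacobian Φ w = Jmat d := by
  intro w hw
  classical
  -- the "evaluate at basis vectors" continuous linear map
  let Pc : (((Fin d ⊕ Fin d) → ℝ) →L[ℝ] ℝ) →L[ℝ] ((Fin d ⊕ Fin d) → ℝ) :=
    ContinuousLinearMap.pi fun i => ContinuousLinearMap.apply ℝ ℝ (Pi.single i 1)
  have hgradeq : grad H = fun y => Pc (fderiv ℝ H y) := by funext y i; rfl
  have hH1 : ContDiff ℝ 1 (fderiv ℝ H) := hH.fderiv_right (by norm_num)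
  have hgradC : ContDiff ℝ 1 (grad H) := by
    rw [hgradeq]; exact Pc.contDiff.comp hH1
  have hgradD : Differentiable ℝ (grad H) := hgradC.differentiable one_ne_zero
  have hfderivD : Differentiable ℝ (fderiv ℝ H) := hH1.differentiable one_ne_zero
  have hDgrad : ∀ y, fderiv ℝ (grad H) y = Pc.comp (fderiv ℝ (fderiv ℝ H) y) := by
    intro y
    have h : grad H = ⇑Pc ∘ (fderiv ℝ H) := rfl
    rw [h, fderiv_comp y Pc.differentiableAt (hfderivD y), ContinuousLinearMap.fderiv]
  -- symmetry of the Hessian matrix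
  have hSym : ∀ y, (matOf (fderiv ℝ (grad H) y))ᵀ = matOf (fderiv ℝ (grad H) y) := by
    intro y
    ext i j
    have hsec := second_derivative_symmetric
      (f' := fderiv ℝ H) (f'' := fderiv ℝ (fderiv ℝ H) y)
      (fun z => ((hH.differentiable (by norm_num)) z).hasFDerivAt)
      (hfderivD y).hasFDerivAt (Pi.single i 1) (Pi.single j 1)
    simp only [Matrix.transpose_apply, matOf_apply, hDgrad y,
      ContinuousLinearMap.comp_apply]
    exact hsec
  -- differentiability of the data at w
  have hud : ∀ j, DifferentiableAt ℝ (u j) w :=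
    fun j => ((hu j).differentiableOn one_ne_zero).differentiableAt (hU.mem_nhds hw)
  have hΦd : DifferentiableAt ℝ Φ w :=
    (hΦ.differentiableOn one_ne_zero).differentiableAt (hU.mem_nhds hw)
  -- the derivative of the vector field composed with each stage
  set Du : Fin s → ((Fin d ⊕ Fin d) → ℝ) →L[ℝ] ((Fin d ⊕ Fin d) → ℝ) := fun j => fderiv ℝ (u j) w with hDu
  set Dg : Fin s → ((Fin d ⊕ Fin d) → ℝ) →L[ℝ] ((Fin d ⊕ Fin d) → ℝ) := fun j =>
    (mvCLM (Jmat d)).comp ((fderiv ℝ (grad H) (u j w)).comp (Du j)) with hDg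
  have hg : ∀ j, HasFDerivAt (fun x => (Jmat d).mulVec (grad H (u j x))) (Dg j) w := by
    intro j
    have h1 : HasFDerivAt (grad H ∘ u j) ((fderiv ℝ (grad H) (u j w)).comp (Du j)) w :=
      (hgradD (u j w)).hasFDerivAt.comp w (hud j).hasFDerivAt
    exact (mvCLM (Jmat d)).hasFDerivAt.comp w h1
  -- derivatives of the stages and of the step map
  have hRK : ∀ i, HasFDerivAt (u i)
      (ContinuousLinearMap.id ℝ ((Fin d ⊕ Fin d) → ℝ) + Δt • ∑ j, a i j • Dg j) w := by
    intro i
    have hbig : HasFDerivAt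
        (fun x => x + Δt • ∑ j, a i j • (Jmat d).mulVec (grad H (u j x)))
        (ContinuousLinearMap.id ℝ ((Fin d ⊕ Fin d) → ℝ) + Δt • ∑ j, a i j • Dg j) w :=
      (hasFDerivAt_id w).add
        ((HasFDerivAt.fun_sum (fun j _ => (hg j).const_smul (a i j))).const_smul Δt)
    exact hbig.congr_of_eventuallyEq
      (by filter_upwards [hU.mem_nhds hw] with x hx using hstage x hx i)
  have hΦRK : HasFDerivAt Φ
      (ContinuousLinearMap.id ℝ ((Fin d ⊕ Fin d) → ℝ) + Δt • ∑ i, b i • Dg i) w := by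
    have hbig : HasFDerivAt
        (fun x => x + Δt • ∑ i, b i • (Jmat d).mulVec (grad H (u i x)))
        (ContinuousLinearMap.id ℝ ((Fin d ⊕ Fin d) → ℝ) + Δt • ∑ i, b i • Dg i) w :=
      (hasFDerivAt_id w).add
        ((HasFDerivAt.fun_sum (fun i _ => (hg i).const_smul (b i))).const_smul Δt)
    exact hbig.congr_of_eventuallyEq
      (by filter_upwards [hU.mem_nhds hw] with x hx using hstep x hx)
  have hDu_eq : ∀ i, Du i = ContinuousLinearMap.id ℝ ((Fin d ⊕ Fin d) → ℝ) + Δt • ∑ j, a i j • Dg j :=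
    fun i => (hud i).hasFDerivAt.unique (hRK i)
  have hDΦ_eq : fderiv ℝ Φ w = ContinuousLinearMap.id ℝ ((Fin d ⊕ Fin d) → ℝ) + Δt • ∑ i, b i • Dg i :=
    hΦd.hasFDerivAt.unique hΦRK
  -- pass to matrices
  set Hm : Fin s → Matrix (Fin d ⊕ Fin d) (Fin d ⊕ Fin d) ℝ := fun j => matOf (fderiv ℝ (grad H) (u j w)) with hHm
  set Km : Fin s → Matrix (Fin d ⊕ Fin d) (Fin d ⊕ Fin d) ℝ := fun j => jacobian (u j) w with hKm
  have hKmat : ∀ j, Km j = matOf (Du j) := fun j => jacobian_eq_matOf' (hud j)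
  have hDgmat : ∀ j, matOf (Dg j) = Jmat d * Hm j * Km j := by
    intro j
    rw [hDg]
    rw [matOf_comp, matOf_comp, matOf_mvCLM, hKmat j, Matrix.mul_assoc]
  have hKeq : ∀ i, Km i = 1 + ∑ j, a i j • (Jmat d * (Δt • Hm j) * Km j) := by
    intro i
    rw [hKmat i, hDu_eq i, matOf_add, matOf_id, matOf_smul, matOf_sum]
    congr 1
    rw [Finset.smul_sum]
    apply Finset.sum_congr rfl
    intro j _
    rw [matOf_smul, hDgmat j, Matrix.mul_smul, Matrix.smul_mul, smul_comm]
  have hPeq : jacobian Φ w = 1 + ∑ i, b i • (Jmat d * (Δt • Hm i) * Km i) := by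
    rw [jacobian_eq_matOf' hΦd, hDΦ_eq, matOf_add, matOf_id, matOf_smul, matOf_sum]
    congr 1
    rw [Finset.smul_sum]
    apply Finset.sum_congr rfl
    intro i _
    rw [matOf_smul, hDgmat i, Matrix.mul_smul, Matrix.smul_mul, smul_comm]
  exact key_algebra (Jmat d) (Jmat_transpose d) (Jmat_tr_mul d) a b hsymp
    (fun j => Δt • Hm j) Km
    (fun j => by rw [Matrix.transpose_smul, hHm]; rw [hSym (u j w)])
    hKeq (jacobian Φ w) hPeq
end

section
/- Let m ≥ 1 and L ≥ 0 be integers, let P : ℝ² → ℝ be a homogeneous polynomial of degree m that is harmonic in the plane (∂²P/∂x² + ∂²P/∂y² = 0), and let C : ℝ → ℝ be of class C^{2L+2}. Define u : ℝ³ → ℝ by u(x,y,z) = Σ_{ℓ=0}^{L} (−1)^ℓ (m!/(2^{2ℓ} ℓ! (ℓ+m)!)) C^{(2ℓ)}(z) (x² + y²)^ℓ P(x,y). Then the Laplacian of u satisfies Δu(x,y,z) = (−1)^L (m!/(2^{2L} L! (L+m)!)) C^{(2L+2)}(z) (x² + y²)^L P(x,y); in particular the truncated cylindrical-harmonic expansion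 of the magnetic scalar potential fails to be harmonic only by a term proportional to the first neglected generalized-gradient derivative C^{(2L+2)}. -/
/-- The truncated generalized-gradient expansion
`u(x,y,z) = ∑_{ℓ=0}^{L} (-1)^ℓ (m!/(2^{2ℓ} ℓ! (ℓ+m)!)) C^{(2ℓ)}(z) (x²+y²)^ℓ P(x,y)`. -/
noncomputable def truncPotential (m L : ℕ) (C : ℝ → ℝ) (P : MvPolynomial (Fin 2) ℝ)
    (x y z : ℝ) : ℝ :=
  ∑ ℓ ∈ Finset.range (L + 1),
    (-1 : ℝ) ^ ℓ *
      ((Nat.factorial m : ℝ) /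
        ((2:ℝ) ^ (2*ℓ) * (Nat.factorial ℓ : ℝ) * (Nat.factorial (ℓ + m) : ℝ))) *
      iteratedDeriv (2*ℓ) C z * (x^2 + y^2) ^ ℓ * MvPolynomial.eval ![x, y] P


open MvPolynomial Finset

noncomputable def Rp : MvPolynomial (Fin 2) ℝ := X 0 ^ 2 + X 1 ^ 2

noncomputable def lap (Q : MvPolynomial (Fin 2) ℝ) : MvPolynomial (Fin 2) ℝ :=
  pderiv 0 (pderiv 0 Q) + pderiv 1 (pderiv 1 Q)

noncomputable def Spoly (m L : ℕ) (C : ℝ → ℝ) (P : MvPolynomial (Fin 2) ℝ) (z : ℝ) :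
    MvPolynomial (Fin 2) ℝ :=
  ∑ ℓ ∈ Finset.range (L + 1),
    MvPolynomial.C ((-1 : ℝ) ^ ℓ *
      ((Nat.factorial m : ℝ) /
        ((2:ℝ) ^ (2*ℓ) * (Nat.factorial ℓ : ℝ) * (Nat.factorial (ℓ + m) : ℝ))) *
      iteratedDeriv (2*ℓ) C z) * (Rp ^ ℓ * P)

lemma pderiv_nat (i : Fin 2) (n : ℕ) : pderiv i ((n : MvPolynomial (Fin 2) ℝ)) = 0 := by
  rw [← C_eq_coe_nat, pderiv_C]

lemma pderiv_ofNat2 (i : Fin 2) : pderiv i ((2 : MvPolynomial (Fin 2) ℝ)) = 0 := by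
  rw [← map_ofNat (C : ℝ →+* MvPolynomial (Fin 2) ℝ) 2, pderiv_C]

lemma lap_R_mul (Q : MvPolynomial (Fin 2) ℝ) :
    lap (Rp * Q) = C 4 * Q + C 4 * (X 0 * pderiv 0 Q + X 1 * pderiv 1 Q) + Rp * lap Q := by
  have h10 : (1 : Fin 2) ≠ 0 := by decide
  have h01 : (0 : Fin 2) ≠ 1 := by decide
  simp only [Rp, lap, pderiv_mul, map_add, pderiv_pow, pderiv_X_self,
    pderiv_X_of_ne h10, pderiv_X_of_ne h01, pderiv_one, Nat.cast_ofNat, pderiv_nat,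
    pderiv_ofNat2, map_zero]
  rw [map_ofNat (C : ℝ →+* MvPolynomial (Fin 2) ℝ) 4]
  ring

lemma X_mul_pderiv_monomial (i : Fin 2) (d : Fin 2 →₀ ℕ) (a : ℝ) :
    X i * pderiv i (monomial d a) = C (d i : ℝ) * monomial d a := by
  rw [pderiv_monomial, C_mul_monomial]
  rcases Nat.eq_zero_or_pos (d i) with h | h
  · simp [h]
  · have hd' : Finsupp.single i 1 + (d - Finsupp.single i 1) = d := by
      ext j
      rcases eq_or_ne j i with rfl | hj
      · simp only [Finsupp.add_apply, Finsupp.tsub_apply, Finsupp.single_eq_same]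
        omega
      · simp [Finsupp.single_eq_of_ne' (Ne.symm hj)]
    rw [X, monomial_mul, one_mul, hd', mul_comm]

lemma euler2 {P : MvPolynomial (Fin 2) ℝ} {n : ℕ} (hP : P.IsHomogeneous n) :
    X 0 * pderiv 0 P + X 1 * pderiv 1 P = C (n : ℝ) * P := by
  conv_lhs => rw [P.as_sum]
  conv_rhs => rw [P.as_sum]
  rw [map_sum (pderiv 0), map_sum (pderiv 1), Finset.mul_sum, Finset.mul_sum, Finset.mul_sum,
    ← Finset.sum_add_distrib]
  refine Finset.sum_congr rfl fun d hd => ?_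
  rw [X_mul_pderiv_monomial, X_mul_pderiv_monomial, ← add_mul, ← C_add]
  have hdeg : (Finsupp.weight 1) d = n := hP (mem_support_iff.mp hd)
  have hw : d 0 + d 1 = n := by
    rw [← hdeg, Finsupp.weight_apply, Finsupp.sum_fintype _ _ (fun _ => by simp),
      Fin.sum_univ_two]
    simp [mul_comm]
  rw [← hw]; push_cast; ring_nf

lemma hRp : Rp.IsHomogeneous 2 := by
  apply MvPolynomial.IsHomogeneous.add <;>
    simpa using (MvPolynomial.isHomogeneous_X ℝ _).pow 2

lemma Ccomb (a b c d : ℝ) (Q : MvPolynomial (Fin 2) ℝ) (h : d = a + a*b + c) :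
    C a * Q + C a * (C b * Q) + C c * Q = C d * Q := by
  rw [h, C_add, C_add, C_mul]; ring

lemma lap_pow {m : ℕ} {P : MvPolynomial (Fin 2) ℝ} (hP : P.IsHomogeneous m)
    (hharm : lap P = 0) :
    ∀ ℓ : ℕ, lap (Rp ^ (ℓ+1) * P) = C ((4:ℝ) * (ℓ+1) * (ℓ+1+m)) * (Rp ^ ℓ * P) := by
  intro ℓ
  induction ℓ with
  | zero =>
    rw [show Rp ^ (0+1) * P = Rp * P by ring, lap_R_mul, hharm, euler2 hP]
    rw [show Rp * (0 : MvPolynomial (Fin 2) ℝ) = C (0:ℝ) * P by simp]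
    rw [show (Rp ^ 0 * P : MvPolynomial (Fin 2) ℝ) = P by ring]
    exact Ccomb _ _ _ _ _ (by push_cast; ring)
  | succ ℓ ih =>
    have hQ : (Rp ^ (ℓ+1) * P).IsHomogeneous (2*(ℓ+1) + m) := (hRp.pow (ℓ+1)).mul hP
    rw [show Rp ^ (ℓ+1+1) * P = Rp * (Rp ^ (ℓ+1) * P) by ring, lap_R_mul, ih, euler2 hQ]
    rw [show Rp * (C ((4:ℝ) * (ℓ+1) * (ℓ+1+m)) * (Rp ^ ℓ * P))
        = C ((4:ℝ) * (ℓ+1) * (ℓ+1+m)) * (Rp ^ (ℓ+1) * P) by ring]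
    exact Ccomb _ _ _ _ _ (by push_cast; ring)

lemma lap_C_mul (c : ℝ) (Q : MvPolynomial (Fin 2) ℝ) : lap (C c * Q) = C c * lap Q := by
  simp [lap, pderiv_C_mul, mul_add]

lemma lap_sum {ι : Type*} (s : Finset ι) (f : ι → MvPolynomial (Fin 2) ℝ) :
    lap (∑ i ∈ s, f i) = ∑ i ∈ s, lap (f i) := by
  simp [lap, map_sum, Finset.sum_add_distrib]

lemma hasDerivAt_eval_fst (Q : MvPolynomial (Fin 2) ℝ) (y t : ℝ) :
    HasDerivAt (fun s => eval ![s, y] Q) (eval ![t, y] (pderiv 0 Q)) t := by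
  induction Q using MvPolynomial.induction_on with
  | C a => simpa using hasDerivAt_const t a
  | add p q hp hq => simpa using hp.fun_add hq
  | mul_X p i hp =>
    fin_cases i
    · simpa [pderiv_mul, mul_comm, add_comm] using hp.fun_mul (hasDerivAt_id' t)
    · show HasDerivAt (fun s => eval ![s, y] (p * X 1)) (eval ![t, y] (pderiv 0 (p * X 1))) t
      rw [show (fun s => eval ![s, y] (p * X 1)) = fun s => eval ![s, y] p * y from
          funext fun s => by simp,
        show eval ![t, y] (pderiv 0 (p * X 1)) = eval ![t, y] (pderiv 0 p) * y by
          simp [pderiv_mul, pderiv_X_of_ne (by decide : (1:Fin 2) ≠ 0), mul_comm]]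
      exact hp.mul_const y

lemma hasDerivAt_eval_snd (Q : MvPolynomial (Fin 2) ℝ) (x t : ℝ) :
    HasDerivAt (fun s => eval ![x, s] Q) (eval ![x, t] (pderiv 1 Q)) t := by
  induction Q using MvPolynomial.induction_on with
  | C a => simpa using hasDerivAt_const t a
  | add p q hp hq => simpa using hp.fun_add hq
  | mul_X p i hp =>
    fin_cases i
    · show HasDerivAt (fun s => eval ![x, s] (p * X 0)) (eval ![x, t] (pderiv 1 (p * X 0))) t
      rw [show (fun s => eval ![x, s] (p * X 0)) = fun s => eval ![x, s] p * x from
          funext fun s => by simp,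
        show eval ![x, t] (pderiv 1 (p * X 0)) = eval ![x, t] (pderiv 1 p) * x by
          simp [pderiv_mul, pderiv_X_of_ne (by decide : (0:Fin 2) ≠ 1), mul_comm]]
      exact hp.mul_const x
    · simpa [pderiv_mul, mul_comm, add_comm] using hp.fun_mul (hasDerivAt_id' t)

lemma iteratedDeriv_two_eval_fst (Q : MvPolynomial (Fin 2) ℝ) (x y : ℝ) :
    iteratedDeriv 2 (fun s => eval ![s, y] Q) x = eval ![x, y] (pderiv 0 (pderiv 0 Q)) := by
  rw [iteratedDeriv_succ, iteratedDeriv_one]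
  have h1 : (deriv fun s => eval ![s, y] Q) = fun s => eval ![s, y] (pderiv 0 Q) :=
    funext fun s => (hasDerivAt_eval_fst Q y s).deriv
  rw [h1]
  exact (hasDerivAt_eval_fst (pderiv 0 Q) y x).deriv

lemma iteratedDeriv_two_eval_snd (Q : MvPolynomial (Fin 2) ℝ) (x y : ℝ) :
    iteratedDeriv 2 (fun s => eval ![x, s] Q) y = eval ![x, y] (pderiv 1 (pderiv 1 Q)) := by
  rw [iteratedDeriv_succ, iteratedDeriv_one]
  have h1 : (deriv fun s => eval ![x, s] Q) = fun s => eval ![x, s] (pderiv 1 Q) :=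
    funext fun s => (hasDerivAt_eval_snd Q x s).deriv
  rw [h1]
  exact (hasDerivAt_eval_snd (pderiv 1 Q) x y).deriv

lemma key_coeff (m ℓ : ℕ) :
    (-1:ℝ)^(ℓ+1) *
      ((Nat.factorial m : ℝ) /
        ((2:ℝ)^(2*(ℓ+1)) * (Nat.factorial (ℓ+1) : ℝ) * (Nat.factorial (ℓ+1+m) : ℝ))) *
      ((4:ℝ) * (ℓ+1) * (ℓ+1+m))
    = -((-1:ℝ)^ℓ *
      ((Nat.factorial m : ℝ) /
        ((2:ℝ)^(2*ℓ) * (Nat.factorial ℓ : ℝ) * (Nat.factorial (ℓ+m) : ℝ)))) := by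
  have h1 : (Nat.factorial (ℓ+1) : ℝ) = (ℓ+1) * (Nat.factorial ℓ : ℝ) := by
    rw [Nat.factorial_succ]; push_cast; ring
  have h2 : (Nat.factorial (ℓ+1+m) : ℝ) = (ℓ+1+m) * (Nat.factorial (ℓ+m) : ℝ) := by
    rw [show ℓ+1+m = (ℓ+m)+1 by omega, Nat.factorial_succ]; push_cast; ring
  have h3 : (2:ℝ)^(2*(ℓ+1)) = (2:ℝ)^(2*ℓ) * 4 := by
    rw [show 2*(ℓ+1) = 2*ℓ+2 by ring, pow_add]; norm_num
  have hf1 : (Nat.factorial ℓ : ℝ) ≠ 0 := Nat.cast_ne_zero.mpr (Nat.factorial_ne_zero ℓ)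
  have hf2 : (Nat.factorial (ℓ+m) : ℝ) ≠ 0 := Nat.cast_ne_zero.mpr (Nat.factorial_ne_zero _)
  have hp2 : (2:ℝ)^(2*ℓ) ≠ 0 := by positivity
  have hl1 : ((ℓ:ℝ)+1) ≠ 0 := by positivity
  have hlm : ((ℓ:ℝ)+1+m) ≠ 0 := by positivity
  rw [h1, h2, h3, pow_succ]
  field_simp

lemma slice_fst (m L : ℕ) (C : ℝ → ℝ) (P : MvPolynomial (Fin 2) ℝ) (y z : ℝ) :
    (fun t => truncPotential m L C P t y z) = fun t => eval ![t, y] (Spoly m L C P z) := by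
  funext t
  simp only [truncPotential, Spoly, map_sum, eval_mul, eval_C, eval_pow, eval_add, Rp, eval_X,
    Matrix.cons_val_zero, Matrix.cons_val_one, Matrix.head_cons]
  exact Finset.sum_congr rfl fun ℓ _ => by ring

lemma slice_snd (m L : ℕ) (C : ℝ → ℝ) (P : MvPolynomial (Fin 2) ℝ) (x z : ℝ) :
    (fun t => truncPotential m L C P x t z) = fun t => eval ![x, t] (Spoly m L C P z) := by
  funext t
  simp only [truncPotential, Spoly, map_sum, eval_mul, eval_C, eval_pow, eval_add, Rp, eval_X,
    Matrix.cons_val_zero, Matrix.cons_val_one, Matrix.head_cons]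
  exact Finset.sum_congr rfl fun ℓ _ => by ring

lemma eval_lap_Spoly (m L : ℕ) (C : ℝ → ℝ) (P : MvPolynomial (Fin 2) ℝ)
    (hP : P.IsHomogeneous m) (hharm : lap P = 0) (x y z : ℝ) :
    eval ![x, y] (lap (Spoly m L C P z)) =
      ∑ ℓ ∈ Finset.range L,
        ((-1:ℝ)^(ℓ+1) *
          ((Nat.factorial m : ℝ) /
            ((2:ℝ)^(2*(ℓ+1)) * (Nat.factorial (ℓ+1) : ℝ) * (Nat.factorial (ℓ+1+m) : ℝ))) *
          iteratedDeriv (2*(ℓ+1)) C z) *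
        (((4:ℝ) * (ℓ+1) * (ℓ+1+m)) * ((x^2+y^2)^ℓ * eval ![x, y] P)) := by
  rw [Spoly, lap_sum, Finset.sum_range_succ']
  have h0 : ∀ c : ℝ, lap (MvPolynomial.C c * (Rp ^ 0 * P)) = 0 := fun c => by
    rw [lap_C_mul, show (Rp ^ 0 * P : MvPolynomial (Fin 2) ℝ) = P by ring, hharm, mul_zero]
  rw [h0, add_zero, map_sum]
  refine Finset.sum_congr rfl fun ℓ _ => ?_
  rw [lap_C_mul, lap_pow hP hharm ℓ]
  simp only [eval_mul, eval_C, eval_pow, eval_add, Rp, eval_X,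
    Matrix.cons_val_zero, Matrix.cons_val_one, Matrix.head_cons]

/-- If `P` is a harmonic homogeneous polynomial of degree `m ≥ 1` in the plane and
`C` is of class `C^{2L+2}`, then the Laplacian of the truncated expansion `u` equals
`(-1)^L (m!/(2^{2L} L! (L+m)!)) C^{(2L+2)}(z) (x²+y²)^L P(x,y)`: the truncation fails
to be harmonic only by a term proportional to the first neglected derivative. -/
theorem laplacian_of_truncated_expansion
    (m L : ℕ) (hm : 1 ≤ m) (C : ℝ → ℝ)
    (hC : ContDiff ℝ ((2*L+2 : ℕ) : ℕ∞) C)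
    (P : MvPolynomial (Fin 2) ℝ) (hP : P.IsHomogeneous m)
    (hharm : (MvPolynomial.pderiv (0 : Fin 2)) ((MvPolynomial.pderiv (0 : Fin 2)) P)
      + (MvPolynomial.pderiv (1 : Fin 2)) ((MvPolynomial.pderiv (1 : Fin 2)) P) = 0)
    (x y z : ℝ) :
    iteratedDeriv 2 (fun t => truncPotential m L C P t y z) x
      + iteratedDeriv 2 (fun t => truncPotential m L C P x t z) y
      + iteratedDeriv 2 (fun t => truncPotential m L C P x y t) z
    = (-1 : ℝ) ^ L *
        ((Nat.factorial m : ℝ) /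
          ((2:ℝ) ^ (2*L) * (Nat.factorial L : ℝ) * (Nat.factorial (L + m) : ℝ))) *
        iteratedDeriv (2*L+2) C z * (x^2 + y^2) ^ L * MvPolynomial.eval ![x, y] P := by
  have hlapP : lap P = 0 := hharm
  -- the horizontal Laplacian
  have hxy : iteratedDeriv 2 (fun t => truncPotential m L C P t y z) x
      + iteratedDeriv 2 (fun t => truncPotential m L C P x t z) y
      = eval ![x, y] (lap (Spoly m L C P z)) := by
    rw [slice_fst, slice_snd, iteratedDeriv_two_eval_fst, iteratedDeriv_two_eval_snd, lap,
      map_add]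
  -- the vertical second derivative
  have hdiff : ∀ k : ℕ, k < 2*L+2 → Differentiable ℝ (iteratedDeriv k C) := by
    intro k hk
    exact hC.differentiable_iteratedDeriv k (by exact_mod_cast hk)
  have hstep : ∀ (k : ℕ), k < 2*L+2 → ∀ t : ℝ,
      HasDerivAt (iteratedDeriv k C) (iteratedDeriv (k+1) C t) t := by
    intro k hk t
    rw [iteratedDeriv_succ]
    exact (hdiff k hk t).hasDerivAt
  have hz1 : ∀ t : ℝ, HasDerivAt (fun s => truncPotential m L C P x y s)
      (∑ ℓ ∈ Finset.range (L + 1),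
        (-1 : ℝ) ^ ℓ *
          ((Nat.factorial m : ℝ) /
            ((2:ℝ) ^ (2*ℓ) * (Nat.factorial ℓ : ℝ) * (Nat.factorial (ℓ + m) : ℝ))) *
          iteratedDeriv (2*ℓ+1) C t * (x^2 + y^2) ^ ℓ * MvPolynomial.eval ![x, y] P) t := by
    intro t
    unfold truncPotential
    refine HasDerivAt.fun_sum fun ℓ hℓ => ?_
    have hℓ' : ℓ < L + 1 := Finset.mem_range.mp hℓ
    exact (((hstep (2*ℓ) (by omega) t).const_mul _).mul_const _).mul_const _
  have hz2 : ∀ t : ℝ, HasDerivAt (fun s => ∑ ℓ ∈ Finset.range (L + 1),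
        (-1 : ℝ) ^ ℓ *
          ((Nat.factorial m : ℝ) /
            ((2:ℝ) ^ (2*ℓ) * (Nat.factorial ℓ : ℝ) * (Nat.factorial (ℓ + m) : ℝ))) *
          iteratedDeriv (2*ℓ+1) C s * (x^2 + y^2) ^ ℓ * MvPolynomial.eval ![x, y] P)
      (∑ ℓ ∈ Finset.range (L + 1),
        (-1 : ℝ) ^ ℓ *
          ((Nat.factorial m : ℝ) /
            ((2:ℝ) ^ (2*ℓ) * (Nat.factorial ℓ : ℝ) * (Nat.factorial (ℓ + m) : ℝ))) *
          iteratedDeriv (2*ℓ+1+1) C t * (x^2 + y^2) ^ ℓ * MvPolynomial.eval ![x, y] P) t := by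
    intro t
    refine HasDerivAt.fun_sum fun ℓ hℓ => ?_
    have hℓ' : ℓ < L + 1 := Finset.mem_range.mp hℓ
    exact (((hstep (2*ℓ+1) (by omega) t).const_mul _).mul_const _).mul_const _
  have hz : iteratedDeriv 2 (fun t => truncPotential m L C P x y t) z
      = ∑ ℓ ∈ Finset.range (L + 1),
        (-1 : ℝ) ^ ℓ *
          ((Nat.factorial m : ℝ) /
            ((2:ℝ) ^ (2*ℓ) * (Nat.factorial ℓ : ℝ) * (Nat.factorial (ℓ + m) : ℝ))) *
          iteratedDeriv (2*ℓ+1+1) C z * (x^2 + y^2) ^ ℓ * MvPolynomial.eval ![x, y] P := by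
    rw [iteratedDeriv_succ, iteratedDeriv_one]
    have h1 : deriv (fun t => truncPotential m L C P x y t)
        = fun t => ∑ ℓ ∈ Finset.range (L + 1),
        (-1 : ℝ) ^ ℓ *
          ((Nat.factorial m : ℝ) /
            ((2:ℝ) ^ (2*ℓ) * (Nat.factorial ℓ : ℝ) * (Nat.factorial (ℓ + m) : ℝ))) *
          iteratedDeriv (2*ℓ+1) C t * (x^2 + y^2) ^ ℓ * MvPolynomial.eval ![x, y] P :=
      funext fun t => (hz1 t).deriv
    rw [h1]
    exact (hz2 z).deriv
  rw [hxy, hz, eval_lap_Spoly m L C P hP hlapP x y z, Finset.sum_range_succ,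
    ← add_assoc, ← Finset.sum_add_distrib]
  have hcancel : ∀ ℓ ∈ Finset.range L,
      ((-1:ℝ)^(ℓ+1) *
          ((Nat.factorial m : ℝ) /
            ((2:ℝ)^(2*(ℓ+1)) * (Nat.factorial (ℓ+1) : ℝ) * (Nat.factorial (ℓ+1+m) : ℝ))) *
          iteratedDeriv (2*(ℓ+1)) C z) *
        (((4:ℝ) * (ℓ+1) * (ℓ+1+m)) * ((x^2+y^2)^ℓ * eval ![x, y] P))
      + (-1 : ℝ) ^ ℓ *
          ((Nat.factorial m : ℝ) /
            ((2:ℝ) ^ (2*ℓ) * (Nat.factorial ℓ : ℝ) * (Nat.factorial (ℓ + m) : ℝ))) *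
          iteratedDeriv (2*ℓ+1+1) C z * (x^2 + y^2) ^ ℓ * MvPolynomial.eval ![x, y] P
      = 0 := by
    intro ℓ _
    rw [show 2*(ℓ+1) = 2*ℓ+1+1 by ring]
    linear_combination (iteratedDeriv (2*ℓ+1+1) C z * ((x^2+y^2)^ℓ * eval ![x, y] P)) *
      key_coeff m ℓ
  rw [Finset.sum_eq_zero hcancel, zero_add]
end
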